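/- Let p = (p_1, p_2, p_3, p_4) be positive integers with gcd 1, q_i = gcd of the p_j for j ≠ i, Q = q_1 q_2 q_3 q_4, and p̃_k = p_k q_k / Q (which are integers). Then for all i ≠ j, one has q_{ij} · q_i · q_j = gcd of the p_k over k ∉ {i, j}, where q_{ij} denotes the gcd of the p̃_k over k ∉ {i, j}. -/

import Mathlib

lemma core_gcd (a b c d qa qb qc qd : ℕ)
    (hqcpos : 0 < qc) (hqdpos : 0 < qd)
    (hab : qa ∣ b) (hac : qa ∣ c) (had : qa ∣ d)
    (hba : qb ∣ a) (hbc : qb ∣ c) (hbd : qb ∣ d)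
    (hca : qc ∣ a) (hcb : qc ∣ b) (hcd : qc ∣ d)
    (hda : qd ∣ a) (hdb : qd ∣ b) (hdc : qd ∣ c)
    (key : ∀ x : ℕ, x ∣ a → x ∣ b → x ∣ c → x ∣ d → x = 1) :
    Nat.gcd (c * qc / (qa * qb * qc * qd)) (d * qd / (qa * qb * qc * qd)) * qa * qb
      = Nat.gcd c d := by
  -- pairwise coprimality of the q's
  have cab : Nat.Coprime qa qb := key _ ((Nat.gcd_dvd_right _ _).trans hba)
    ((Nat.gcd_dvd_left _ _).trans hab) ((Nat.gcd_dvd_left _ _).trans hac)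
    ((Nat.gcd_dvd_left _ _).trans had)
  have cac : Nat.Coprime qa qc := key _ ((Nat.gcd_dvd_right _ _).trans hca)
    ((Nat.gcd_dvd_left _ _).trans hab) ((Nat.gcd_dvd_left _ _).trans hac)
    ((Nat.gcd_dvd_left _ _).trans had)
  have cad : Nat.Coprime qa qd := key _ ((Nat.gcd_dvd_right _ _).trans hda)
    ((Nat.gcd_dvd_left _ _).trans hab) ((Nat.gcd_dvd_left _ _).trans hac)
    ((Nat.gcd_dvd_left _ _).trans had)
  have cbc : Nat.Coprime qb qc := key _ ((Nat.gcd_dvd_left _ _).trans hba)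
    ((Nat.gcd_dvd_right _ _).trans hcb) ((Nat.gcd_dvd_left _ _).trans hbc)
    ((Nat.gcd_dvd_left _ _).trans hbd)
  have cbd : Nat.Coprime qb qd := key _ ((Nat.gcd_dvd_left _ _).trans hba)
    ((Nat.gcd_dvd_right _ _).trans hdb) ((Nat.gcd_dvd_left _ _).trans hbc)
    ((Nat.gcd_dvd_left _ _).trans hbd)
  set g := Nat.gcd c d with hg
  have hgc : g ∣ c := Nat.gcd_dvd_left _ _
  have hgd : g ∣ d := Nat.gcd_dvd_right _ _
  -- coprimality of g with qc and qd
  have cgc : Nat.Coprime g qc := key _ ((Nat.gcd_dvd_right _ _).trans hca)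
    ((Nat.gcd_dvd_right _ _).trans hcb) ((Nat.gcd_dvd_left _ _).trans hgc)
    ((Nat.gcd_dvd_left _ _).trans hgd)
  have cgd : Nat.Coprime g qd := key _ ((Nat.gcd_dvd_right _ _).trans hda)
    ((Nat.gcd_dvd_right _ _).trans hdb) ((Nat.gcd_dvd_left _ _).trans hgc)
    ((Nat.gcd_dvd_left _ _).trans hgd)
  -- products dividing c and d
  have habdvd : qa * qb ∣ c := cab.mul_dvd_of_dvd_of_dvd hac hbc
  have habdvd' : qa * qb ∣ d := cab.mul_dvd_of_dvd_of_dvd had hbd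
  have hmc : qa * qb * qd ∣ c := (cad.mul cbd).mul_dvd_of_dvd_of_dvd habdvd hdc
  have hnd : qa * qb * qc ∣ d := (cac.mul cbc).mul_dvd_of_dvd_of_dvd habdvd' hcd
  have hgab : qa * qb ∣ g := Nat.dvd_gcd habdvd habdvd'
  set g' := g / (qa * qb) with hg'
  have hg'mul : g' * (qa * qb) = g := Nat.div_mul_cancel hgab
  -- simplify the divisions
  have e1 : c * qc / (qa * qb * qc * qd) = c / (qa * qb * qd) := by
    rw [show qa * qb * qc * qd = qa * qb * qd * qc by ring,
      Nat.mul_div_mul_right _ _ hqcpos]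
  have e2 : d * qd / (qa * qb * qc * qd) = d / (qa * qb * qc) := by
    rw [show qa * qb * qc * qd = qa * qb * qc * qd by ring,
      Nat.mul_div_mul_right _ _ hqdpos]
  rw [e1, e2]
  -- show gcd (c/m) (d/n) = g'
  have main : Nat.gcd (c / (qa * qb * qd)) (d / (qa * qb * qc)) = g' := by
    apply Nat.dvd_antisymm
    · -- e ∣ g'
      set e := Nat.gcd (c / (qa * qb * qd)) (d / (qa * qb * qc)) with he
      have h1 : e ∣ c / (qa * qb * qd) := Nat.gcd_dvd_left _ _
      have h2 : e ∣ d / (qa * qb * qc) := Nat.gcd_dvd_right _ _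
      -- c/(qa*qb*qd) ∣ c/(qa*qb)
      have hd1 : qd ∣ c / (qa * qb) := (Nat.dvd_div_iff_mul_dvd habdvd).mpr hmc
      have hd2 : qc ∣ d / (qa * qb) := (Nat.dvd_div_iff_mul_dvd habdvd').mpr hnd
      have hc1 : c / (qa * qb * qd) ∣ c / (qa * qb) := by
        rw [show qa * qb * qd = (qa * qb) * qd by ring, ← Nat.div_div_eq_div_mul]
        exact Nat.div_dvd_of_dvd hd1
      have hc2 : d / (qa * qb * qc) ∣ d / (qa * qb) := by
        rw [show qa * qb * qc = (qa * qb) * qc by ring, ← Nat.div_div_eq_div_mul]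
        exact Nat.div_dvd_of_dvd hd2
      have hec : e ∣ c / (qa * qb) := h1.trans hc1
      have hed : e ∣ d / (qa * qb) := h2.trans hc2
      have : qa * qb * e ∣ g := Nat.dvd_gcd
        ((Nat.dvd_div_iff_mul_dvd habdvd).mp hec) ((Nat.dvd_div_iff_mul_dvd habdvd').mp hed)
      exact (Nat.dvd_div_iff_mul_dvd hgab).mpr this
    · -- g' ∣ e
      apply Nat.dvd_gcd
      · apply (Nat.dvd_div_iff_mul_dvd hmc).mpr
        have : (qa * qb * qd) * g' = g * qd := by
          rw [show (qa * qb * qd) * g' = g' * (qa * qb) * qd by ring, hg'mul]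
        rw [this]
        exact cgd.mul_dvd_of_dvd_of_dvd hgc hdc
      · apply (Nat.dvd_div_iff_mul_dvd hnd).mpr
        have : (qa * qb * qc) * g' = g * qc := by
          rw [show (qa * qb * qc) * g' = g' * (qa * qb) * qc by ring, hg'mul]
        rw [this]
        exact cgc.mul_dvd_of_dvd_of_dvd hgd hcd
  rw [main, mul_assoc, hg'mul]

lemma pair_case (p q pt : Fin 4 → ℕ)
    (hp : ∀ i, 0 < p i) (hgcd : Finset.univ.gcd p = 1)
    (hq : ∀ i, q i = (Finset.univ.erase i).gcd p)
    (Q : ℕ) (hQ : Q = ∏ i, q i)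
    (hpt : ∀ k, pt k = p k * q k / Q)
    (i j k l : Fin 4)
    (hij : i ≠ j) (hik : i ≠ k) (hil : i ≠ l) (hjk : j ≠ k) (hjl : j ≠ l)
    (hkl : k ≠ l)
    (hs : (Finset.univ.erase i).erase j = {k, l})
    (huniv : ({i, j, k, l} : Finset (Fin 4)) = Finset.univ) :
    ((Finset.univ.erase i).erase j).gcd pt * q i * q j =
      ((Finset.univ.erase i).erase j).gcd p := by
  have gl : ∀ f : Fin 4 → ℕ, ({k, l} : Finset (Fin 4)).gcd f = Nat.gcd (f k) (f l) := by
    intro f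
    rw [Finset.gcd_insert (b := k) (s := {l}), Finset.gcd_singleton]
    simp only [normalize_eq]
    rfl
  have hQeq : Q = q i * q j * q k * q l := by
    rw [hQ, ← huniv, Finset.prod_insert (by simp [hij, hik, hil]),
      Finset.prod_insert (by simp [hjk, hjl]), Finset.prod_insert (by simp [hkl]),
      Finset.prod_singleton, mul_assoc, mul_assoc]
  -- positivity of each q m
  have hqpos : ∀ m : Fin 4, 0 < q m := by
    intro m
    rcases Nat.eq_zero_or_pos (q m) with h0 | h
    · exfalso
      rw [hq m] at h0
      obtain ⟨n, hn⟩ : ∃ n : Fin 4, n ≠ m := by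
        rcases Decidable.em (m = 0) with rfl | hm
        · exact ⟨1, by decide⟩
        · exact ⟨0, fun h => hm h.symm⟩
      have := Finset.gcd_eq_zero_iff.mp h0 n (Finset.mem_erase.mpr ⟨hn, Finset.mem_univ n⟩)
      exact absurd this (hp n).ne'
    · exact h
  -- divisibility of q m on p n for n ≠ m
  have hqdvd : ∀ m n : Fin 4, n ≠ m → q m ∣ p n := by
    intro m n hnm
    rw [hq m]
    exact Finset.gcd_dvd (Finset.mem_erase.mpr ⟨hnm, Finset.mem_univ n⟩)
  have key : ∀ x : ℕ, x ∣ p i → x ∣ p j → x ∣ p k → x ∣ p l → x = 1 := by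
    intro x h1 h2 h3 h4
    have : x ∣ Finset.univ.gcd p := by
      apply Finset.dvd_gcd
      intro n _
      have hn : n ∈ ({i, j, k, l} : Finset (Fin 4)) := huniv ▸ Finset.mem_univ n
      simp only [Finset.mem_insert, Finset.mem_singleton] at hn
      rcases hn with rfl | rfl | rfl | rfl <;> assumption
    rw [hgcd] at this
    exact Nat.dvd_one.mp this
  rw [hs, gl, gl, hpt k, hpt l, hQeq]
  exact core_gcd (p i) (p j) (p k) (p l) (q i) (q j) (q k) (q l)
    (hqpos k) (hqpos l)
    (hqdvd i j (Ne.symm hij)) (hqdvd i k (Ne.symm hik)) (hqdvd i l (Ne.symm hil))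
    (hqdvd j i hij) (hqdvd j k (Ne.symm hjk)) (hqdvd j l (Ne.symm hjl))
    (hqdvd k i hik) (hqdvd k j hjk) (hqdvd k l (Ne.symm hkl))
    (hqdvd l i hil) (hqdvd l j hjl) (hqdvd l k hkl)
    key

/-- For `n = 4` weights with gcd 1, partial gcds `q`, `Q = q 1 q 2 q 3 q 4`
and reduced weights `p̃ k = p k * q k / Q`, one has for all `i ≠ j` that
`q_{ij} * q i * q j` equals the gcd of the `p k` over `k ∉ {i, j}`, where
`q_{ij}` is the gcd of the reduced weights over `k ∉ {i, j}`. -/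
theorem reduced_pair_gcd_identity (p : Fin 4 → ℕ)
    (hp : ∀ i, 0 < p i) (hgcd : Finset.univ.gcd p = 1)
    (q : Fin 4 → ℕ) (hq : ∀ i, q i = (Finset.univ.erase i).gcd p)
    (Q : ℕ) (hQ : Q = ∏ i, q i)
    (pt : Fin 4 → ℕ) (hpt : ∀ k, pt k = p k * q k / Q)
    (hint : ∀ k, Q ∣ p k * q k) :
    ∀ i j, i ≠ j →
      ((Finset.univ.erase i).erase j).gcd pt * q i * q j =
        ((Finset.univ.erase i).erase j).gcd p := by
  intro i j hij
  fin_cases i <;> fin_cases j <;>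
    first
      | exact absurd rfl hij
      | exact pair_case p q pt hp hgcd hq Q hQ hpt 0 1 2 3
          (by decide) (by decide) (by decide) (by decide) (by decide) (by decide)
          (by decide) (by decide)
      | exact pair_case p q pt hp hgcd hq Q hQ hpt 0 2 1 3
          (by decide) (by decide) (by decide) (by decide) (by decide) (by decide)
          (by decide) (by decide)
      | exact pair_case p q pt hp hgcd hq Q hQ hpt 0 3 1 2
          (by decide) (by decide) (by decide) (by decide) (by decide) (by decide)
          (by decide) (by decide)
      | exact pair_case p q pt hp hgcd hq Q hQ hpt 1 0 2 3
          (by decide) (by decide) (by decide) (by decide) (by decide) (by decide)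
          (by decide) (by decide)
      | exact pair_case p q pt hp hgcd hq Q hQ hpt 1 2 0 3
          (by decide) (by decide) (by decide) (by decide) (by decide) (by decide)
          (by decide) (by decide)
      | exact pair_case p q pt hp hgcd hq Q hQ hpt 1 3 0 2
          (by decide) (by decide) (by decide) (by decide) (by decide) (by decide)
          (by decide) (by decide)
      | exact pair_case p q pt hp hgcd hq Q hQ hpt 2 0 1 3
          (by decide) (by decide) (by decide) (by decide) (by decide) (by decide)
          (by decide) (by decide)
      | exact pair_case p q pt hp hgcd hq Q hQ hpt 2 1 0 3
          (by decide) (by decide) (by decide) (by decide) (by decide) (by decide)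
          (by decide) (by decide)
      | exact pair_case p q pt hp hgcd hq Q hQ hpt 2 3 0 1
          (by decide) (by decide) (by decide) (by decide) (by decide) (by decide)
          (by decide) (by decide)
      | exact pair_case p q pt hp hgcd hq Q hQ hpt 3 0 1 2
          (by decide) (by decide) (by decide) (by decide) (by decide) (by decide)
          (by decide) (by decide)
      | exact pair_case p q pt hp hgcd hq Q hQ hpt 3 1 0 2
          (by decide) (by decide) (by decide) (by decide) (by decide) (by decide)
          (by decide) (by decide)
      | exact pair_case p q pt hp hgcd hq Q hQ hpt 3 2 0 1
          (by decide) (by decide) (by decide) (by decide) (by decide) (by decide)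
          (by decide) (by decide)
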